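/- Let f : [0,1] → ℝ be symmetric with respect to x = 1/2, i.e. f(x) = f(1−x) for all x ∈ [0,1], and define the symmetric Riemann sum λ_n(f) := (1/n) ∑_{k=0}^{n} f(k/n) − f(1/2)/n for n ≥ 1. (1) If f is concave on [0,1], then λ_n(f) is increasing in n. (2) If f is convex on [0,1], then λ_n(f) is decreasing in n. -/

import Mathlib

open Finset

/-- Symmetric Riemann sum `λ_n(f) = (1/n) ∑_{k=0}^{n} f (k/n) - f(1/2)/n`. -/
noncomputable def riemannSym (f : ℝ → ℝ) (n : ℕ) : ℝ :=
  (1 / (n : ℝ)) * ∑ k ∈ Finset.range (n + 1), f ((k : ℝ) / (n : ℝ)) - f (1 / 2) / (n : ℝ)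

lemma riemannSym_mono_of_concave (f : ℝ → ℝ)
    (hsym : ∀ x ∈ Set.Icc (0:ℝ) 1, f x = f (1 - x))
    (hc : ConcaveOn ℝ (Set.Icc (0:ℝ) 1) f) :
    ∀ n : ℕ, 1 ≤ n → riemannSym f n ≤ riemannSym f (n + 1) := by
  intro n hn
  have hN : (0:ℝ) < (n:ℝ) := by exact_mod_cast hn
  have hN1 : (0:ℝ) < (n:ℝ) + 1 := by linarith
  -- every sample value is at most f(1/2)
  have hmax : ∀ x ∈ Set.Icc (0:ℝ) 1, f x ≤ f (1/2) := by
    intro x hx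
    have hx' : (1:ℝ) - x ∈ Set.Icc (0:ℝ) 1 :=
      ⟨by linarith [hx.2], by linarith [hx.1]⟩
    have h := hc.2 hx hx' (by norm_num : (0:ℝ) ≤ 1/2) (by norm_num : (0:ℝ) ≤ 1/2)
      (by norm_num)
    have hmid : (1/2:ℝ) • x + (1/2:ℝ) • (1 - x) = 1/2 := by
      simp only [smul_eq_mul]; ring
    rw [hmid, smul_eq_mul, smul_eq_mul, ← hsym x hx] at h
    linarith
  set Sn := ∑ k ∈ Finset.range (n+1), f ((k:ℝ)/(n:ℝ)) with hSn
  set Sm := ∑ k ∈ Finset.range (n+2), f ((k:ℝ)/((n:ℝ)+1)) with hSm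
  have hS : Sn ≤ ((n:ℝ)+1) * f (1/2) := by
    calc Sn ≤ ∑ _k ∈ Finset.range (n+1), f (1/2) := by
            apply Finset.sum_le_sum
            intro k hk
            have hk' : (k:ℝ) ≤ (n:ℝ) := by
              exact_mod_cast Nat.lt_succ_iff.mp (Finset.mem_range.mp hk)
            exact hmax _ ⟨by positivity, by rw [div_le_one hN]; exact hk'⟩
      _ = ((n:ℝ)+1) * f (1/2) := by
            rw [Finset.sum_const, Finset.card_range, nsmul_eq_mul]; push_cast; ring
  -- pointwise concavity inequality
  have hpt : ∀ j ∈ Finset.range n,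
      ((j:ℝ)+1) * f ((j:ℝ)/(n:ℝ)) + ((n:ℝ)-(j:ℝ)) * f (((j:ℝ)+1)/(n:ℝ))
        ≤ ((n:ℝ)+1) * f (((j:ℝ)+1)/((n:ℝ)+1)) := by
    intro j hj
    have hjn : (j:ℝ) + 1 ≤ (n:ℝ) := by exact_mod_cast Finset.mem_range.mp hj
    have hj0 : (0:ℝ) ≤ (j:ℝ) := Nat.cast_nonneg j
    have hxm : (j:ℝ)/(n:ℝ) ∈ Set.Icc (0:ℝ) 1 :=
      ⟨by positivity, by rw [div_le_one hN]; linarith⟩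
    have hym : ((j:ℝ)+1)/(n:ℝ) ∈ Set.Icc (0:ℝ) 1 :=
      ⟨by positivity, by rw [div_le_one hN]; linarith⟩
    have ha : (0:ℝ) ≤ ((j:ℝ)+1)/((n:ℝ)+1) := by positivity
    have hb : (0:ℝ) ≤ ((n:ℝ)-(j:ℝ))/((n:ℝ)+1) := by
      apply div_nonneg <;> linarith
    have hab : ((j:ℝ)+1)/((n:ℝ)+1) + ((n:ℝ)-(j:ℝ))/((n:ℝ)+1) = 1 := by
      field_simp
      ring
    have h := hc.2 hxm hym ha hb hab
    have hxy : (((j:ℝ)+1)/((n:ℝ)+1)) • ((j:ℝ)/(n:ℝ))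
        + (((n:ℝ)-(j:ℝ))/((n:ℝ)+1)) • (((j:ℝ)+1)/(n:ℝ)) = ((j:ℝ)+1)/((n:ℝ)+1) := by
      simp only [smul_eq_mul]
      field_simp
      ring
    rw [hxy, smul_eq_mul, smul_eq_mul, div_mul_eq_mul_div, div_mul_eq_mul_div,
      ← add_div, div_le_iff₀ hN1] at h
    linarith
  have hsum := Finset.sum_le_sum hpt
  -- identities for the two sides
  have e1 : ∑ j ∈ Finset.range n, ((n:ℝ)+1) * f (((j:ℝ)+1)/((n:ℝ)+1))
      = ((n:ℝ)+1) * Sm - ((n:ℝ)+1) * f 0 - ((n:ℝ)+1) * f 1 := by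
    rw [hSm, show n + 2 = (n+1) + 1 from rfl, Finset.sum_range_succ,
      Finset.sum_range_succ', mul_add, mul_add, Finset.mul_sum]
    push_cast
    rw [zero_div, div_self (ne_of_gt hN1)]
    ring
  have e2a : ∑ j ∈ Finset.range (n+1), ((j:ℝ)+1) * f ((j:ℝ)/(n:ℝ))
      = (∑ j ∈ Finset.range n, ((j:ℝ)+1) * f ((j:ℝ)/(n:ℝ))) + ((n:ℝ)+1) * f 1 := by
    rw [Finset.sum_range_succ, div_self (ne_of_gt hN)]
  have e2b : ∑ j ∈ Finset.range (n+1), ((n:ℝ)+1-(j:ℝ)) * f ((j:ℝ)/(n:ℝ))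
      = (∑ j ∈ Finset.range n, ((n:ℝ)-(j:ℝ)) * f (((j:ℝ)+1)/(n:ℝ))) + ((n:ℝ)+1) * f 0 := by
    rw [Finset.sum_range_succ']
    push_cast
    rw [zero_div]
    refine congrArg₂ (· + ·) (Finset.sum_congr rfl fun i _ => by ring) (by ring)
  have e3 : (∑ j ∈ Finset.range (n+1), ((j:ℝ)+1) * f ((j:ℝ)/(n:ℝ)))
      + (∑ j ∈ Finset.range (n+1), ((n:ℝ)+1-(j:ℝ)) * f ((j:ℝ)/(n:ℝ)))
      = ((n:ℝ)+2) * Sn := by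
    rw [← Finset.sum_add_distrib, hSn, Finset.mul_sum]
    exact Finset.sum_congr rfl fun j _ => by ring
  rw [Finset.sum_add_distrib, e1] at hsum
  have hKey : ((n:ℝ)+2) * Sn ≤ ((n:ℝ)+1) * Sm := by
    have := e3
    nlinarith [hsum, e2a, e2b]
  -- final arithmetic
  have key2 : ((n:ℝ)+1) * Sn - f (1/2) ≤ (n:ℝ) * Sm := by
    nlinarith [hS, mul_le_mul_of_nonneg_left hKey hN.le]
  show (1 / (n:ℝ)) * Sn - f (1/2) / (n:ℝ)
      ≤ (1 / ((n+1:ℕ):ℝ)) * (∑ k ∈ Finset.range ((n+1)+1), f ((k:ℝ)/((n+1:ℕ):ℝ)))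
        - f (1/2) / ((n+1:ℕ):ℝ)
  push_cast
  rw [show (1:ℝ)/(n:ℝ) * Sn - f (1/2)/(n:ℝ) = (Sn - f (1/2))/(n:ℝ) by ring]
  have hSm' : (∑ k ∈ Finset.range (n+1+1), f ((k:ℝ)/((n:ℝ)+1))) = Sm := by rw [hSm]
  rw [hSm',
    show (1:ℝ)/((n:ℝ)+1) * Sm - f (1/2)/((n:ℝ)+1) = (Sm - f (1/2))/((n:ℝ)+1) by ring,
    div_le_div_iff₀ hN hN1]
  nlinarith [key2]

theorem stmt7 (f : ℝ → ℝ)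
    (hsym : ∀ x ∈ Set.Icc (0:ℝ) 1, f x = f (1 - x)) :
    (ConcaveOn ℝ (Set.Icc (0:ℝ) 1) f →
      ∀ n : ℕ, 1 ≤ n → riemannSym f n ≤ riemannSym f (n + 1)) ∧
    (ConvexOn ℝ (Set.Icc (0:ℝ) 1) f →
      ∀ n : ℕ, 1 ≤ n → riemannSym f (n + 1) ≤ riemannSym f n) := by
  constructor
  · exact fun hc => riemannSym_mono_of_concave f hsym hc
  · intro hc n hn
    have h := riemannSym_mono_of_concave (fun x => -f x)
      (fun x hx => by simp [hsym x hx]) hc.neg n hn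
    have e : ∀ m : ℕ, riemannSym (fun x => -f x) m = - riemannSym f m := by
      intro m
      simp only [riemannSym, Finset.sum_neg_distrib]
      ring
    rw [e, e] at h
    linarith
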